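/- (Littler's formula is harmonic for the Wright-Fisher backward operator.) Let $i_0, i_1, \dots, i_{n-1}$ be distinct indices in $\{0,1,\dots,n\}$ and for $p \in \Delta_n$ (with $p^0 := 1 - \sum_{l=1}^n p^l$) define $u(p) = p^{i_0} \cdot \frac{p^{i_1}}{1 - p^{i_0}} \cdot \frac{p^{i_2}}{1 - p^{i_0} - p^{i_1}} \cdots \frac{p^{i_{n-1}}}{1 - \sum_{l=0}^{n-2} p^{i_l}}$. Then $L_n^* u = \frac{1}{2}\sum_{i,j=1}^n p^i(\delta^i_j - p^j)\partial_{p^i}\partial_{p^j} u = 0$ on $\Delta_n$. -/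

import Mathlib

open scoped BigOperators

noncomputable section

/-- The open standard orthogonal simplex in ℝⁿ. -/
def stdSimplexO (n : ℕ) : Set (Fin n → ℝ) :=
  {p | (∀ i, 0 < p i) ∧ ∑ i, p i < 1}

/-- The closed standard orthogonal simplex in ℝⁿ. -/
def stdSimplexC (n : ℕ) : Set (Fin n → ℝ) :=
  {p | (∀ i, 0 ≤ p i) ∧ ∑ i, p i ≤ 1}

/-- First partial derivative in coordinate direction `i`. -/
def pd {n : ℕ} (u : (Fin n → ℝ) → ℝ) (i : Fin n) (p : Fin n → ℝ) : ℝ :=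
  fderiv ℝ u p (Pi.single i 1)

/-- Second partial derivative `∂_j ∂_i`. -/
def pd2 {n : ℕ} (u : (Fin n → ℝ) → ℝ) (i j : Fin n) (p : Fin n → ℝ) : ℝ :=
  pd (pd u i) j p

/-- Kronecker delta. -/
def kdelta {n : ℕ} (i j : Fin n) : ℝ := if i = j then 1 else 0

/-- Kolmogorov backward (Wright–Fisher) operator `L_n^*`. -/
def Lb {n : ℕ} (u : (Fin n → ℝ) → ℝ) (p : Fin n → ℝ) : ℝ :=
  (1/2) * ∑ i, ∑ j, p i * (kdelta i j - p j) * pd2 u i j p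

/-- Kolmogorov forward (Wright–Fisher) operator `L_n`. -/
def Lf {n : ℕ} (u : (Fin n → ℝ) → ℝ) (p : Fin n → ℝ) : ℝ :=
  (1/2) * ∑ i, ∑ j, pd2 (fun q => q i * (kdelta i j - q j) * u q) i j p

/-- Extended coordinates on the simplex: `coordExt p 0 = p^0 = 1 - ∑ p^i`,
`coordExt p (i+1) = p^(i+1)`. -/
def coordExt {n : ℕ} (p : Fin n → ℝ) : Fin (n + 1) → ℝ :=
  Fin.cons (1 - ∑ i, p i) p

namespace WFL
variable {n : ℕ}

def Lc (c : Fin n → ℝ) : (Fin n → ℝ) →L[ℝ] ℝ :=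
  ∑ i, c i • (ContinuousLinearMap.proj i : (Fin n → ℝ) →L[ℝ] ℝ)

lemma Lc_apply (c v : Fin n → ℝ) : Lc c v = ∑ i, c i * v i := by
  simp [Lc]

lemma Lc_single (c : Fin n → ℝ) (i : Fin n) : Lc c (Pi.single i 1) = c i := by
  simp [Lc_apply, Pi.single_apply]

lemma hasFDerivAt_affine (r : ℝ) (c : Fin n → ℝ) (q : Fin n → ℝ) :
    HasFDerivAt (fun v => r + Lc c v) (Lc c) q := by
  simpa using (Lc c).hasFDerivAt.const_add r

variable (idx : Fin n → Fin (n + 1))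

def ell (j i : Fin n) : ℝ :=
  (if idx j = i.succ then 1 else 0) - (if idx j = 0 then 1 else 0)

def sg (j i : Fin n) : ℝ := ∑ l ∈ Finset.univ.filter (· < j), ell idx l i

def XX (j : Fin n) (q : Fin n → ℝ) : ℝ := coordExt q (idx j)

def DD (j : Fin n) (q : Fin n → ℝ) : ℝ :=
  1 - ∑ l ∈ Finset.univ.filter (· < j), XX idx l q

def uu (q : Fin n → ℝ) : ℝ := ∏ j, XX idx j q / DD idx j q

lemma hasFDerivAt_XX (j : Fin n) (q : Fin n → ℝ) :
    HasFDerivAt (XX idx j) (Lc (ell idx j)) q := by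
  cases' hc : idx j using Fin.cases with m
  · have he : ell idx j = fun _ => (-1 : ℝ) := by
      funext i
      simp [ell, hc, (Fin.succ_ne_zero i).symm]
    have hf : XX idx j = fun v => (1 : ℝ) + Lc (fun _ => (-1 : ℝ)) v := by
      funext v
      simp [XX, coordExt, hc, Lc_apply, sub_eq_add_neg, Finset.sum_neg_distrib]
    rw [hf, he]
    exact hasFDerivAt_affine _ _ q
  · have he : ell idx j = fun i => if m = i then (1 : ℝ) else 0 := by
      funext i
      simp [ell, hc, Fin.succ_inj, (Fin.succ_ne_zero m)]
    have hf : XX idx j = fun v => (0 : ℝ) + Lc (fun i => if m = i then (1 : ℝ) else 0) v := by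
      funext v
      simp [XX, coordExt, hc, Lc_apply, ite_mul]
    rw [hf, he]
    exact hasFDerivAt_affine _ _ q

lemma hasFDerivAt_DD (j : Fin n) (q : Fin n → ℝ) :
    HasFDerivAt (DD idx j) (-(Lc (sg idx j))) q := by
  have h : ∀ q, DD idx j q = 1 - ∑ l ∈ Finset.univ.filter (· < j), XX idx l q := fun _ => rfl
  have : HasFDerivAt (fun q => 1 - ∑ l ∈ Finset.univ.filter (· < j), XX idx l q)
      ((0 : (Fin n → ℝ) →L[ℝ] ℝ) - ∑ l ∈ Finset.univ.filter (· < j), Lc (ell idx l)) q :=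
    (hasFDerivAt_const 1 q).sub (HasFDerivAt.fun_sum fun l _ => hasFDerivAt_XX idx l q)
  convert this using 1
  · exact funext h
  ext v
  simp [Lc_apply, sg, Finset.sum_mul, Finset.mul_sum]
  rw [Finset.sum_comm]

section

lemma coordExt_pos {p : Fin n → ℝ} (hp : p ∈ stdSimplexO n) (k : Fin (n + 1)) :
    0 < coordExt p k := by
  cases' k using Fin.cases with m
  · simpa [coordExt] using hp.2
  · simpa [coordExt] using hp.1 m

lemma sum_coordExt (p : Fin n → ℝ) : ∑ k, coordExt p k = 1 := by
  rw [Fin.sum_univ_succ]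
  simp [coordExt]

lemma XX_pos {p : Fin n → ℝ} (hp : p ∈ stdSimplexO n) (j : Fin n) : 0 < XX idx j p :=
  coordExt_pos hp (idx j)

lemma DD_pos (hinj : Function.Injective idx) {p : Fin n → ℝ} (hp : p ∈ stdSimplexO n)
    (j : Fin n) : 0 < DD idx j p := by
  have h1 : ∑ l ∈ Finset.univ.filter (· < j), XX idx l p
      = ∑ k ∈ (Finset.univ.filter (· < j)).image idx, coordExt p k := by
    rw [Finset.sum_image (fun a _ b _ h => hinj h)]
    rfl
  have hnotmem : idx j ∉ (Finset.univ.filter (· < j)).image idx := by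
    simp only [Finset.mem_image, Finset.mem_filter]
    rintro ⟨l, ⟨-, hl⟩, he⟩
    exact absurd (hinj he) (ne_of_lt hl)
  have h2 : coordExt p (idx j) + ∑ k ∈ (Finset.univ.filter (· < j)).image idx, coordExt p k
      ≤ ∑ k, coordExt p k := by
    rw [← Finset.sum_insert hnotmem]
    exact Finset.sum_le_sum_of_subset_of_nonneg (Finset.subset_univ _)
      (fun k _ _ => (coordExt_pos hp k).le)
  rw [sum_coordExt] at h2
  have := XX_pos idx hp j
  unfold DD
  rw [h1]
  unfold XX at this
  linarith

end


def UU : Set (Fin n → ℝ) := {q | (∀ j, XX idx j q ≠ 0) ∧ (∀ j, DD idx j q ≠ 0)}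

lemma isOpen_UU : IsOpen (UU idx) := by
  have hXc : ∀ j : Fin n, Continuous (XX idx j) :=
    fun j => continuous_iff_continuousAt.2 fun q => (hasFDerivAt_XX idx j q).continuousAt
  have hDc : ∀ j : Fin n, Continuous (DD idx j) :=
    fun j => continuous_iff_continuousAt.2 fun q => (hasFDerivAt_DD idx j q).continuousAt
  have h : UU idx = (⋂ j, (XX idx j) ⁻¹' {(0:ℝ)}ᶜ) ∩ (⋂ j, (DD idx j) ⁻¹' {(0:ℝ)}ᶜ) := by
    ext q
    simp [UU, Set.mem_iInter, Set.mem_preimage]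
  rw [h]
  exact (isOpen_iInter_of_finite fun j => isOpen_compl_singleton.preimage (hXc j)).inter
    (isOpen_iInter_of_finite fun j => isOpen_compl_singleton.preimage (hDc j))

lemma simplex_subset_UU (hinj : Function.Injective idx) :
    stdSimplexO n ⊆ UU idx := fun p hp =>
  ⟨fun j => (XX_pos idx hp j).ne', fun j => (DD_pos idx hinj hp j).ne'⟩

def AA (q : Fin n → ℝ) (i : Fin n) : ℝ :=
  ∑ j, (ell idx j i / XX idx j q + sg idx j i / DD idx j q)

def DU (q : Fin n → ℝ) : (Fin n → ℝ) →L[ℝ] ℝ :=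
  ∑ j, ((uu idx q / XX idx j q) • Lc (ell idx j) + (uu idx q / DD idx j q) • Lc (sg idx j))

lemma DU_single (q : Fin n → ℝ) (i : Fin n) : DU idx q (Pi.single i 1) = uu idx q * AA idx q i := by
  simp only [DU, AA, ContinuousLinearMap.sum_apply, ContinuousLinearMap.add_apply,
    ContinuousLinearMap.smul_apply, Lc_single, smul_eq_mul, Finset.mul_sum]
  refine Finset.sum_congr rfl fun j _ => by ring

lemma hasFDerivAt_uu {q : Fin n → ℝ} (hX : ∀ j, XX idx j q ≠ 0) (hD : ∀ j, DD idx j q ≠ 0) :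
    HasFDerivAt (uu idx) (DU idx q) q := by
  have hf : ∀ j : Fin n, HasFDerivAt (fun q => XX idx j q / DD idx j q)
      (XX idx j q • ((-(DD idx j q ^ 2)⁻¹) • (-(Lc (sg idx j)))) +
        (DD idx j q)⁻¹ • Lc (ell idx j)) q := by
    intro j
    have hinv : HasFDerivAt (fun q => (DD idx j q)⁻¹)
        ((-(DD idx j q ^ 2)⁻¹) • (-(Lc (sg idx j)))) q :=
      (hasDerivAt_inv (hD j)).comp_hasFDerivAt q (hasFDerivAt_DD idx j q)
    have h := (hasFDerivAt_XX idx j q).mul hinv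
    have heq : (fun q => XX idx j q / DD idx j q) = fun q => XX idx j q * (DD idx j q)⁻¹ := by
      funext v; rw [div_eq_mul_inv]
    rw [heq]
    exact h
  have h := HasFDerivAt.finset_prod (u := Finset.univ) (g := fun j q => XX idx j q / DD idx j q)
    (fun j _ => hf j)
  have huu : uu idx = (∏ j ∈ Finset.univ, (fun q => XX idx j q / DD idx j q) ·) := by
    funext v; simp [uu]
  rw [huu]
  refine h.congr_fderiv ?_
  symm
  ext v
  simp only [DU, ContinuousLinearMap.sum_apply, ContinuousLinearMap.add_apply,
    ContinuousLinearMap.smul_apply, ContinuousLinearMap.neg_apply, Lc_apply, smul_eq_mul]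
  refine Finset.sum_congr rfl fun j _ => ?_
  have hE : (∏ k ∈ Finset.univ.erase j, XX idx k q / DD idx k q) * (XX idx j q / DD idx j q)
      = uu idx q := Finset.prod_erase_mul _ _ (Finset.mem_univ j)
  rw [← hE]
  have h1 := hX j
  have h2 := hD j
  have h3 : (∏ x ∈ Finset.univ.erase j, XX idx x q) ≠ 0 :=
    Finset.prod_ne_zero_iff.2 fun k _ => hX k
  have h4 : (∏ x ∈ Finset.univ.erase j, DD idx x q) ≠ 0 :=
    Finset.prod_ne_zero_iff.2 fun k _ => hD k
  field_simp
  ring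


lemma pd_uu {q : Fin n → ℝ} (hX : ∀ j, XX idx j q ≠ 0) (hD : ∀ j, DD idx j q ≠ 0) (i : Fin n) :
    pd (uu idx) i q = uu idx q * AA idx q i := by
  rw [pd, (hasFDerivAt_uu idx hX hD).fderiv, DU_single]

def BB (q : Fin n → ℝ) (i i' : Fin n) : ℝ :=
  ∑ j, (-(ell idx j i * ell idx j i') / (XX idx j q) ^ 2
    + (sg idx j i * sg idx j i') / (DD idx j q) ^ 2)

def DV (q : Fin n → ℝ) (i : Fin n) : (Fin n → ℝ) →L[ℝ] ℝ :=
  ∑ j, ((-(ell idx j i) / (XX idx j q) ^ 2) • Lc (ell idx j)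
    + (sg idx j i / (DD idx j q) ^ 2) • Lc (sg idx j))

lemma DV_single (q : Fin n → ℝ) (i i' : Fin n) :
    DV idx q i (Pi.single i' 1) = BB idx q i i' := by
  simp only [DV, BB, ContinuousLinearMap.sum_apply, ContinuousLinearMap.add_apply,
    ContinuousLinearMap.smul_apply, Lc_single, smul_eq_mul]
  refine Finset.sum_congr rfl fun j _ => by ring

lemma hasFDerivAt_AA {q : Fin n → ℝ} (hX : ∀ j, XX idx j q ≠ 0) (hD : ∀ j, DD idx j q ≠ 0)
    (i : Fin n) : HasFDerivAt (fun q => AA idx q i) (DV idx q i) q := by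
  have hterm : ∀ j : Fin n,
      HasFDerivAt (fun q => ell idx j i / XX idx j q + sg idx j i / DD idx j q)
        ((-(ell idx j i) / (XX idx j q) ^ 2) • Lc (ell idx j)
          + (sg idx j i / (DD idx j q) ^ 2) • Lc (sg idx j)) q := by
    intro j
    have h1 : HasFDerivAt (fun q => (XX idx j q)⁻¹) ((-(XX idx j q ^ 2)⁻¹) • Lc (ell idx j)) q :=
      (hasDerivAt_inv (hX j)).comp_hasFDerivAt q (hasFDerivAt_XX idx j q)
    have h2 : HasFDerivAt (fun q => (DD idx j q)⁻¹)
        ((-(DD idx j q ^ 2)⁻¹) • (-(Lc (sg idx j)))) q :=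
      (hasDerivAt_inv (hD j)).comp_hasFDerivAt q (hasFDerivAt_DD idx j q)
    have h3 := (h1.const_mul (ell idx j i)).add (h2.const_mul (sg idx j i))
    have heq : (fun q => ell idx j i / XX idx j q + sg idx j i / DD idx j q)
        = fun q => ell idx j i * (XX idx j q)⁻¹ + sg idx j i * (DD idx j q)⁻¹ := by
      funext v; rw [div_eq_mul_inv, div_eq_mul_inv]
    rw [heq]
    refine h3.congr_fderiv ?_
    symm
    ext v
    have h4 := hX j
    have h5 := hD j
    simp only [ContinuousLinearMap.add_apply, ContinuousLinearMap.smul_apply,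
      ContinuousLinearMap.neg_apply, smul_eq_mul]
    field_simp
  exact HasFDerivAt.fun_sum (fun j _ => hterm j)

lemma pd2_uu (hinj : Function.Injective idx) {p : Fin n → ℝ} (hp : p ∈ stdSimplexO n)
    (i i' : Fin n) :
    pd2 (uu idx) i i' p = uu idx p * (AA idx p i * AA idx p i' + BB idx p i i') := by
  have hpU := simplex_subset_UU idx hinj hp
  have hU : UU idx ∈ nhds p := (isOpen_UU idx).mem_nhds hpU
  have hev : pd (uu idx) i =ᶠ[nhds p] fun q => uu idx q * AA idx q i :=
    Filter.eventuallyEq_of_mem hU fun q hq => pd_uu idx hq.1 hq.2 i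
  rw [pd2, pd, hev.fderiv_eq]
  have h1 : HasFDerivAt (fun q => uu idx q * AA idx q i)
      (uu idx p • DV idx p i + AA idx p i • DU idx p) p :=
    (hasFDerivAt_uu idx hpU.1 hpU.2).mul (hasFDerivAt_AA idx hpU.1 hpU.2 i)
  rw [h1.fderiv]
  simp only [ContinuousLinearMap.add_apply, ContinuousLinearMap.smul_apply, smul_eq_mul,
    DU_single, DV_single]
  ring


section Cov
variable (p : Fin n → ℝ)

def Cov (c d : Fin n → ℝ) : ℝ :=
  (∑ i, p i * (c i * d i)) - (∑ i, p i * c i) * (∑ i, p i * d i)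

lemma sum_w (c d : Fin n → ℝ) :
    ∑ i, ∑ i', p i * (kdelta i i' - p i') * (c i * d i') = Cov p c d := by
  have h : ∀ i i' : Fin n, p i * (kdelta i i' - p i') * (c i * d i')
      = (if i = i' then p i' * (c i' * d i') else 0) - (p i * c i) * (p i' * d i') := by
    intro i i'
    unfold kdelta
    split
    · rename_i hii; subst hii; ring
    · ring
  simp only [h, Finset.sum_sub_distrib, Finset.sum_ite_eq, Finset.mem_univ, if_true,
    ← Finset.mul_sum]
  rw [← Finset.sum_mul]
  rfl

lemma sum_w' (r : ℝ) (c d : Fin n → ℝ) :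
    ∑ i, ∑ i', p i * (kdelta i i' - p i') * (r * (c i * d i')) = r * Cov p c d := by
  rw [← sum_w p c d, Finset.mul_sum]
  refine Finset.sum_congr rfl fun i _ => ?_
  rw [Finset.mul_sum]
  exact Finset.sum_congr rfl fun i' _ => by ring

lemma Cov_comm (c d : Fin n → ℝ) : Cov p c d = Cov p d c := by
  have h : ∑ i, p i * (c i * d i) = ∑ i, p i * (d i * c i) :=
    Finset.sum_congr rfl fun i _ => by ring
  unfold Cov
  rw [h]
  ring

lemma Cov_sum_left {ι : Type*} (s : Finset ι) (c : ι → Fin n → ℝ) (d : Fin n → ℝ) :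
    Cov p (fun i => ∑ j ∈ s, c j i) d = ∑ j ∈ s, Cov p (c j) d := by
  have h1 : ∑ i, p i * ((∑ j ∈ s, c j i) * d i) = ∑ j ∈ s, ∑ i, p i * (c j i * d i) := by
    rw [Finset.sum_comm]
    exact Finset.sum_congr rfl fun i _ => by
      rw [Finset.sum_mul, Finset.mul_sum]
  have h2 : ∑ i, p i * (∑ j ∈ s, c j i) = ∑ j ∈ s, ∑ i, p i * c j i := by
    rw [Finset.sum_comm]
    exact Finset.sum_congr rfl fun i _ => by rw [Finset.mul_sum]
  unfold Cov
  rw [h1, h2, Finset.sum_mul, ← Finset.sum_sub_distrib]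

lemma Cov_add_left (c c' d : Fin n → ℝ) :
    Cov p (fun i => c i + c' i) d = Cov p c d + Cov p c' d := by
  unfold Cov
  have h1 : ∑ i, p i * ((c i + c' i) * d i)
      = (∑ i, p i * (c i * d i)) + ∑ i, p i * (c' i * d i) := by
    rw [← Finset.sum_add_distrib]
    exact Finset.sum_congr rfl fun i _ => by ring
  have h2 : ∑ i, p i * (c i + c' i) = (∑ i, p i * c i) + ∑ i, p i * c' i := by
    rw [← Finset.sum_add_distrib]
    exact Finset.sum_congr rfl fun i _ => by ring
  rw [h1, h2]
  ring

lemma Cov_smul_left (r : ℝ) (c d : Fin n → ℝ) :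
    Cov p (fun i => r * c i) d = r * Cov p c d := by
  unfold Cov
  have h1 : ∑ i, p i * ((r * c i) * d i) = r * ∑ i, p i * (c i * d i) := by
    rw [Finset.mul_sum]
    exact Finset.sum_congr rfl fun i _ => by ring
  have h2 : ∑ i, p i * (r * c i) = r * ∑ i, p i * c i := by
    rw [Finset.mul_sum]
    exact Finset.sum_congr rfl fun i _ => by ring
  rw [h1, h2]
  ring

end Cov

def cc (j : Fin n) : ℝ := if idx j = 0 then 1 else 0

lemma hs1 (p : Fin n → ℝ) (j : Fin n) :
    ∑ i, p i * ell idx j i = XX idx j p - cc idx j := by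
  cases' hc : idx j using Fin.cases with m
  · have he : ∀ i, ell idx j i = -1 := fun i => by
      simp [ell, hc, (Fin.succ_ne_zero i).symm]
    simp only [he, mul_neg_one, Finset.sum_neg_distrib, XX, coordExt, hc, cc]
    simp
  · have he : ∀ i, ell idx j i = if m = i then 1 else 0 := fun i => by
      simp [ell, hc, Fin.succ_inj, Fin.succ_ne_zero m]
    simp only [he, mul_ite, mul_one, mul_zero, Finset.sum_ite_eq, Finset.mem_univ, if_true,
      XX, coordExt, hc, cc]
    simp [Fin.succ_ne_zero m]

lemma hs2 (hinj : Function.Injective idx) (p : Fin n → ℝ) (j k : Fin n) :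
    ∑ i, p i * (ell idx j i * ell idx k i)
      = (if j = k then XX idx j p else 0) - cc idx j * XX idx k p - cc idx k * XX idx j p
        + cc idx j * cc idx k := by
  cases' hcj : idx j using Fin.cases with m
  · cases' hck : idx k using Fin.cases with m'
    · have hjk : j = k := hinj (hcj.trans hck.symm)
      subst hjk
      have he : ∀ i, ell idx j i = -1 := fun i => by
        simp [ell, hcj, (Fin.succ_ne_zero i).symm]
      have h1 : ∀ i, p i * (ell idx j i * ell idx j i) = p i := fun i => by rw [he]; ring
      simp only [h1, if_pos rfl]
      simp [XX, coordExt, hcj, cc]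
    · have hjk : j ≠ k := fun h => by rw [h, hck] at hcj; exact (Fin.succ_ne_zero m').symm hcj.symm
      have hej : ∀ i, ell idx j i = -1 := fun i => by
        simp [ell, hcj, (Fin.succ_ne_zero i).symm]
      have hek : ∀ i, ell idx k i = if m' = i then 1 else 0 := fun i => by
        simp [ell, hck, Fin.succ_inj, Fin.succ_ne_zero m']
      have h1 : ∀ i, p i * (ell idx j i * ell idx k i) = -(if m' = i then p i else 0) :=
        fun i => by rw [hej, hek]; split <;> ring
      simp only [h1, Finset.sum_neg_distrib, Finset.sum_ite_eq, Finset.mem_univ, if_true,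
        if_neg hjk]
      simp [cc, hcj, hck, Fin.succ_ne_zero, XX, coordExt]
  · cases' hck : idx k using Fin.cases with m'
    · have hjk : j ≠ k := fun h => by rw [h, hck] at hcj; exact Fin.succ_ne_zero m hcj.symm
      have hej : ∀ i, ell idx j i = if m = i then 1 else 0 := fun i => by
        simp [ell, hcj, Fin.succ_inj, Fin.succ_ne_zero m]
      have hek : ∀ i, ell idx k i = -1 := fun i => by
        simp [ell, hck, (Fin.succ_ne_zero i).symm]
      have h1 : ∀ i, p i * (ell idx j i * ell idx k i) = -(if m = i then p i else 0) :=
        fun i => by rw [hej, hek]; split <;> ring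
      simp only [h1, Finset.sum_neg_distrib, Finset.sum_ite_eq, Finset.mem_univ, if_true,
        if_neg hjk]
      simp [cc, hcj, hck, Fin.succ_ne_zero, XX, coordExt]
    · have hej : ∀ i, ell idx j i = if m = i then 1 else 0 := fun i => by
        simp [ell, hcj, Fin.succ_inj, Fin.succ_ne_zero m]
      have hek : ∀ i, ell idx k i = if m' = i then 1 else 0 := fun i => by
        simp [ell, hck, Fin.succ_inj, Fin.succ_ne_zero m']
      have hiff : j = k ↔ m = m' := by
        constructor
        · intro h; rw [h, hck] at hcj; exact (Fin.succ_injective _ hcj).symm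
        · intro h; exact hinj (by rw [hcj, hck, h])
      have h1 : ∀ i, p i * (ell idx j i * ell idx k i)
          = if m = i then (if m' = i then p i else 0) else 0 := fun i => by
        rw [hej, hek]; by_cases h1 : m = i <;> by_cases h2 : m' = i <;> simp [h1, h2]
      simp only [h1, Finset.sum_ite_eq, Finset.mem_univ, if_true]
      by_cases h : m = m'
      · subst h
        simp only [if_pos rfl, if_pos (hiff.mpr rfl)]
        simp [cc, hcj, hck, Fin.succ_ne_zero, XX, coordExt]
      · have hne : j ≠ k := fun hh => h (hiff.mp hh)
        simp only [if_neg h, if_neg hne]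
        simp [cc, hcj, hck, Fin.succ_ne_zero, Ne.symm h]


lemma Cov_ell_ell (hinj : Function.Injective idx) (p : Fin n → ℝ) (j k : Fin n) :
    Cov p (ell idx j) (ell idx k)
      = (if j = k then XX idx j p else 0) - XX idx j p * XX idx k p := by
  unfold Cov
  rw [hs2 idx hinj p j k, hs1, hs1]
  ring

lemma Cov_sg_ell (hinj : Function.Injective idx) (p : Fin n → ℝ) (j k : Fin n) :
    Cov p (sg idx j) (ell idx k)
      = (if k < j then XX idx k p else 0)
        - (∑ l ∈ Finset.univ.filter (· < j), XX idx l p) * XX idx k p := by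
  have h : Cov p (sg idx j) (ell idx k)
      = ∑ l ∈ Finset.univ.filter (· < j), Cov p (ell idx l) (ell idx k) := by
    have hsg : sg idx j = fun i => ∑ l ∈ Finset.univ.filter (· < j), ell idx l i := by
      funext i; rfl
    rw [hsg, Cov_sum_left]
  rw [h]
  simp only [Cov_ell_ell idx hinj, Finset.sum_sub_distrib, Finset.sum_ite_eq',
    Finset.mem_filter, Finset.mem_univ, true_and, ← Finset.sum_mul]

lemma Cov_ell_sg (hinj : Function.Injective idx) (p : Fin n → ℝ) (j k : Fin n) :
    Cov p (ell idx j) (sg idx k)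
      = (if j < k then XX idx j p else 0)
        - (∑ l ∈ Finset.univ.filter (· < k), XX idx l p) * XX idx j p := by
  rw [Cov_comm, Cov_sg_ell idx hinj]

lemma Cov_sg_sg (hinj : Function.Injective idx) (p : Fin n → ℝ) (j k : Fin n) :
    Cov p (sg idx j) (sg idx k)
      = (∑ l ∈ Finset.univ.filter (fun l => l < j ∧ l < k), XX idx l p)
        - (∑ l ∈ Finset.univ.filter (· < j), XX idx l p)
          * (∑ l ∈ Finset.univ.filter (· < k), XX idx l p) := by
  have h : Cov p (sg idx j) (sg idx k)
      = ∑ l ∈ Finset.univ.filter (· < j), Cov p (ell idx l) (sg idx k) := by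
    have hsg : sg idx j = fun i => ∑ l ∈ Finset.univ.filter (· < j), ell idx l i := by
      funext i; rfl
    rw [hsg, Cov_sum_left]
  rw [h]
  simp only [Cov_ell_sg idx hinj, Finset.sum_sub_distrib]
  congr 1
  · rw [← Finset.sum_filter, Finset.filter_filter]
  · rw [← Finset.mul_sum]
    ring


lemma pair_zero (hinj : Function.Injective idx) (p : Fin n → ℝ)
    (hX : ∀ j, XX idx j p ≠ 0) (hD : ∀ j, DD idx j p ≠ 0) (j k : Fin n) :
    (XX idx j p)⁻¹ * (XX idx k p)⁻¹ * Cov p (ell idx j) (ell idx k)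
      + (XX idx j p)⁻¹ * (DD idx k p)⁻¹ * Cov p (ell idx j) (sg idx k)
      + (DD idx j p)⁻¹ * (XX idx k p)⁻¹ * Cov p (sg idx j) (ell idx k)
      + (DD idx j p)⁻¹ * (DD idx k p)⁻¹ * Cov p (sg idx j) (sg idx k)
      + (if j = k then -((XX idx j p) ^ 2)⁻¹ * Cov p (ell idx j) (ell idx j)
          + ((DD idx j p) ^ 2)⁻¹ * Cov p (sg idx j) (sg idx j) else 0) = 0 := by
  have hSj : ∑ l ∈ Finset.univ.filter (· < j), XX idx l p = 1 - DD idx j p := by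
    unfold DD; ring
  have hSk : ∑ l ∈ Finset.univ.filter (· < k), XX idx l p = 1 - DD idx k p := by
    unfold DD; ring
  have h1 := hX j
  have h2 := hX k
  have h3 := hD j
  have h4 := hD k
  rcases lt_trichotomy j k with hjk | hjk | hjk
  · have hmin : Finset.univ.filter (fun l => l < j ∧ l < k) = Finset.univ.filter (· < j) := by
      apply Finset.filter_congr
      intro l _
      exact ⟨fun h => h.1, fun h => ⟨h, h.trans hjk⟩⟩
    rw [Cov_ell_ell idx hinj, Cov_ell_sg idx hinj, Cov_sg_ell idx hinj, Cov_sg_sg idx hinj,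
      hmin, hSj, hSk, if_neg (ne_of_lt hjk), if_neg (ne_of_lt hjk),
      if_pos hjk, if_neg (asymm hjk)]
    field_simp
    ring
  · subst hjk
    have hmin : Finset.univ.filter (fun l => l < j ∧ l < j) = Finset.univ.filter (· < j) := by
      apply Finset.filter_congr
      intro l _
      exact and_self_iff
    rw [Cov_ell_ell idx hinj, Cov_ell_sg idx hinj, Cov_sg_ell idx hinj, Cov_sg_sg idx hinj,
      hmin, hSj]
    simp only [if_pos rfl, if_neg (lt_irrefl j), if_true]
    field_simp
    ring
  · have hmin : Finset.univ.filter (fun l => l < j ∧ l < k) = Finset.univ.filter (· < k) := by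
      apply Finset.filter_congr
      intro l _
      exact ⟨fun h => h.2, fun h => ⟨h.trans hjk, h⟩⟩
    rw [Cov_ell_ell idx hinj, Cov_ell_sg idx hinj, Cov_sg_ell idx hinj, Cov_sg_sg idx hinj,
      hmin, hSj, hSk, if_neg (ne_of_gt hjk), if_neg (asymm hjk), if_pos hjk,
      if_neg (ne_of_gt hjk)]
    field_simp
    ring


lemma Cov_add_right (p c d d' : Fin n → ℝ) :
    Cov p c (fun i => d i + d' i) = Cov p c d + Cov p c d' := by
  rw [Cov_comm, Cov_add_left, Cov_comm p d c, Cov_comm p d' c]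

lemma Cov_smul_right (p : Fin n → ℝ) (r : ℝ) (c d : Fin n → ℝ) :
    Cov p c (fun i => r * d i) = r * Cov p c d := by
  rw [Cov_comm, Cov_smul_left, Cov_comm p d c]

lemma Cov_expand (p : Fin n → ℝ) (r1 r2 s1 s2 : ℝ) (c1 c2 d1 d2 : Fin n → ℝ) :
    Cov p (fun i => r1 * c1 i + r2 * c2 i) (fun i => s1 * d1 i + s2 * d2 i)
      = r1 * s1 * Cov p c1 d1 + r1 * s2 * Cov p c1 d2 + r2 * s1 * Cov p c2 d1
        + r2 * s2 * Cov p c2 d2 := by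
  rw [Cov_add_left, Cov_smul_left, Cov_smul_left, Cov_add_right, Cov_add_right,
    Cov_smul_right, Cov_smul_right, Cov_smul_right, Cov_smul_right]
  ring

theorem Lb_uu (hinj : Function.Injective idx) {p : Fin n → ℝ} (hp : p ∈ stdSimplexO n) :
    Lb (uu idx) p = 0 := by
  obtain ⟨hX, hD⟩ := simplex_subset_UU idx hinj hp
  unfold Lb
  have h1 : ∀ i i' : Fin n, p i * (kdelta i i' - p i') * pd2 (uu idx) i i' p
      = uu idx p * (p i * (kdelta i i' - p i') * (AA idx p i * AA idx p i'))
        + uu idx p * (p i * (kdelta i i' - p i') * BB idx p i i') := by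
    intro i i'
    rw [pd2_uu idx hinj hp]
    ring
  simp only [h1, Finset.sum_add_distrib, ← Finset.mul_sum]
  rw [sum_w]
  -- second double sum: reorganize
  have hswap : ∀ F : Fin n → Fin n → Fin n → ℝ,
      ∑ i : Fin n, ∑ i' : Fin n, ∑ j : Fin n, F i i' j
        = ∑ j : Fin n, ∑ i : Fin n, ∑ i' : Fin n, F i i' j := by
    intro F
    rw [show (∑ i : Fin n, ∑ i' : Fin n, ∑ j : Fin n, F i i' j)
        = ∑ i : Fin n, ∑ j : Fin n, ∑ i' : Fin n, F i i' j from
      Finset.sum_congr rfl fun i _ => Finset.sum_comm]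
    exact Finset.sum_comm
  have hW2 : ∑ i, ∑ i', p i * (kdelta i i' - p i') * BB idx p i i'
      = ∑ j, (-((XX idx j p) ^ 2)⁻¹ * Cov p (ell idx j) (ell idx j)
          + ((DD idx j p) ^ 2)⁻¹ * Cov p (sg idx j) (sg idx j)) := by
    have hb : ∀ i i' : Fin n, p i * (kdelta i i' - p i') * BB idx p i i'
        = ∑ j, (p i * (kdelta i i' - p i')
              * (-((XX idx j p) ^ 2)⁻¹ * (ell idx j i * ell idx j i'))
            + p i * (kdelta i i' - p i')
              * (((DD idx j p) ^ 2)⁻¹ * (sg idx j i * sg idx j i'))) := by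
      intro i i'
      rw [BB, Finset.mul_sum]
      refine Finset.sum_congr rfl fun j _ => ?_
      have h4 := hX j
      have h5 := hD j
      field_simp
    simp only [hb]
    rw [hswap]
    refine Finset.sum_congr rfl fun j _ => ?_
    rw [show (∑ i : Fin n, ∑ i' : Fin n,
        (p i * (kdelta i i' - p i') * (-(XX idx j p ^ 2)⁻¹ * (ell idx j i * ell idx j i'))
          + p i * (kdelta i i' - p i') * ((DD idx j p ^ 2)⁻¹ * (sg idx j i * sg idx j i'))))
      = (∑ i : Fin n, ∑ i' : Fin n,
          p i * (kdelta i i' - p i') * (-(XX idx j p ^ 2)⁻¹ * (ell idx j i * ell idx j i')))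
        + ∑ i : Fin n, ∑ i' : Fin n,
            p i * (kdelta i i' - p i') * ((DD idx j p ^ 2)⁻¹ * (sg idx j i * sg idx j i')) from by
      rw [← Finset.sum_add_distrib]
      exact Finset.sum_congr rfl fun i _ => by rw [← Finset.sum_add_distrib]]
    rw [sum_w', sum_w']
  have hAA : Cov p (AA idx p) (AA idx p)
      = ∑ j, ∑ k, ((XX idx j p)⁻¹ * (XX idx k p)⁻¹ * Cov p (ell idx j) (ell idx k)
          + (XX idx j p)⁻¹ * (DD idx k p)⁻¹ * Cov p (ell idx j) (sg idx k)
          + (DD idx j p)⁻¹ * (XX idx k p)⁻¹ * Cov p (sg idx j) (ell idx k)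
          + (DD idx j p)⁻¹ * (DD idx k p)⁻¹ * Cov p (sg idx j) (sg idx k)) := by
    have hA : AA idx p = fun i => ∑ j,
        ((XX idx j p)⁻¹ * ell idx j i + (DD idx j p)⁻¹ * sg idx j i) := by
      funext i
      exact Finset.sum_congr rfl fun j _ => by rw [div_eq_inv_mul, div_eq_inv_mul]
    rw [hA, Cov_sum_left]
    refine Finset.sum_congr rfl fun j _ => ?_
    rw [Cov_comm, Cov_sum_left]
    refine Finset.sum_congr rfl fun k _ => ?_
    rw [Cov_comm, Cov_expand]
  have hz : ∀ j k : Fin n,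
      (((XX idx j p)⁻¹ * (XX idx k p)⁻¹ * Cov p (ell idx j) (ell idx k)
        + (XX idx j p)⁻¹ * (DD idx k p)⁻¹ * Cov p (ell idx j) (sg idx k)
        + (DD idx j p)⁻¹ * (XX idx k p)⁻¹ * Cov p (sg idx j) (ell idx k)
        + (DD idx j p)⁻¹ * (DD idx k p)⁻¹ * Cov p (sg idx j) (sg idx k))
      + (if j = k then -((XX idx j p) ^ 2)⁻¹ * Cov p (ell idx j) (ell idx j)
          + ((DD idx j p) ^ 2)⁻¹ * Cov p (sg idx j) (sg idx j) else 0)) = 0 := by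
    intro j k
    have := pair_zero idx hinj p hX hD j k
    linarith
  have hdiag : ∑ j, (-((XX idx j p) ^ 2)⁻¹ * Cov p (ell idx j) (ell idx j)
        + ((DD idx j p) ^ 2)⁻¹ * Cov p (sg idx j) (sg idx j))
      = ∑ j, ∑ k, (if j = k then -((XX idx j p) ^ 2)⁻¹ * Cov p (ell idx j) (ell idx j)
          + ((DD idx j p) ^ 2)⁻¹ * Cov p (sg idx j) (sg idx j) else 0) := by
    refine Finset.sum_congr rfl fun j _ => ?_
    rw [Finset.sum_ite_eq, if_pos (Finset.mem_univ j)]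
  have hzero : Cov p (AA idx p) (AA idx p)
      + ∑ j, (-((XX idx j p) ^ 2)⁻¹ * Cov p (ell idx j) (ell idx j)
          + ((DD idx j p) ^ 2)⁻¹ * Cov p (sg idx j) (sg idx j)) = 0 := by
    rw [hAA, hdiag, ← Finset.sum_add_distrib]
    refine Finset.sum_eq_zero fun j _ => ?_
    rw [← Finset.sum_add_distrib]
    exact Finset.sum_eq_zero fun k _ => hz j k
  rw [hW2, ← mul_add, hzero, mul_zero, mul_zero]

end WFL

/-- Littler's formula is harmonic for the Wright–Fisher backward operator. -/
theorem stmt9 (n : ℕ) (idx : Fin n → Fin (n + 1)) (hinj : Function.Injective idx) :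
    ∀ p ∈ stdSimplexO n,
      Lb (fun q => ∏ j : Fin n,
          coordExt q (idx j) /
            (1 - ∑ l ∈ Finset.univ.filter (· < j), coordExt q (idx l))) p = 0 := by
  intro p hp
  have h : (fun q => ∏ j : Fin n,
      coordExt q (idx j) /
        (1 - ∑ l ∈ Finset.univ.filter (· < j), coordExt q (idx l))) = WFL.uu idx := rfl
  rw [h]
  exact WFL.Lb_uu idx hinj hp
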